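/- In the middle order P_n viewed as a Heyting algebra, for permutations v, w with inversion sequences (x_i), (y_i), the relative pseudocomplement v ⇝ w = max{z : v ∧ z ≤ w} has inversion sequence z_i = i−1 if x_i ≤ y_i and z_i = y_i if x_i > y_i. Moreover, a permutation v is a regular element (v = ¬¬v, where ¬v := v ⇝ e_n) if and only if for every i, either x_i = 0 or x_i = i−1; equivalently, v avoids both patterns 132 and 231. -/
import Mathlib


/-- The inversion sequence of a permutation `w` of `Fin n` (0-indexed values):
`invSeq w i` counts the values `j < i` appearing after `i` in one-line notation. -/
def invSeq {n : ℕ} (w : Equiv.Perm (Fin n)) (i : Fin n) : ℕ :=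
  (Finset.univ.filter (fun j : Fin n => j < i ∧ w.symm i < w.symm j)).card

/-- The middle order on permutations: coordinate-wise comparison of inversion sequences. -/
def midLe {n : ℕ} (v w : Equiv.Perm (Fin n)) : Prop :=
  ∀ i, invSeq v i ≤ invSeq w i

/-- `p` is the pseudocomplement of `v` in the middle order (the meet being computed
coordinate-wise on inversion sequences, and the minimum being the identity, whose
inversion sequence is zero): `p` is the largest `z` with `v ∧ z = e_n`. -/
def IsPseudocomplement {n : ℕ} (v p : Equiv.Perm (Fin n)) : Prop :=
  (∀ i, min (invSeq v i) (invSeq p i) = 0) ∧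
  ∀ u : Equiv.Perm (Fin n), (∀ i, min (invSeq v i) (invSeq u i) = 0) → midLe u p

/-- `w` avoids the pattern 132. -/
def Avoids132 {n : ℕ} (w : Equiv.Perm (Fin n)) : Prop :=
  ¬ ∃ i j k : Fin n, i < j ∧ j < k ∧ w i < w k ∧ w k < w j

/-- `w` avoids the pattern 231. -/
def Avoids231 {n : ℕ} (w : Equiv.Perm (Fin n)) : Prop :=
  ¬ ∃ i j k : Fin n, i < j ∧ j < k ∧ w k < w i ∧ w i < w j

open Finset

lemma filter_lt_card {n : ℕ} (i : Fin n) :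
    (univ.filter (fun j : Fin n => j < i)).card = (i : ℕ) := by
  rw [show (univ.filter (fun j : Fin n => j < i)) = Finset.Iio i by
    ext j; simp [Finset.mem_Iio]]
  exact Fin.card_Iio i

lemma invSeq_le {n : ℕ} (w : Equiv.Perm (Fin n)) (i : Fin n) : invSeq w i ≤ (i : ℕ) := by
  calc invSeq w i ≤ (univ.filter (fun j : Fin n => j < i)).card :=
        card_le_card (by intro j hj; simp_all [Finset.mem_filter])
    _ = (i : ℕ) := filter_lt_card i

lemma rank_card {n : ℕ} (e : Fin n ≃ Fin n) (i : Fin n) :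
    (univ.filter (fun j : Fin n => e j < e i)).card = (e i : ℕ) := by
  rw [show (univ.filter (fun j : Fin n => e j < e i))
      = Finset.image e.symm (univ.filter (fun j : Fin n => j < e i)) by
    ext k
    simp only [Finset.mem_image, Finset.mem_filter, Finset.mem_univ, true_and]
    constructor
    · intro h; exact ⟨e k, h, e.symm_apply_apply k⟩
    · rintro ⟨j, hj, rfl⟩; simpa using hj]
  rw [Finset.card_image_of_injective _ e.symm.injective, filter_lt_card]

/-- number of values `k < j` positioned before `j` -/
def bCnt {n : ℕ} (w : Equiv.Perm (Fin n)) (j : Fin n) : ℕ :=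
  (univ.filter (fun k : Fin n => k < j ∧ w.symm k < w.symm j)).card

lemma bCnt_add_invSeq {n : ℕ} (w : Equiv.Perm (Fin n)) (j : Fin n) :
    bCnt w j + invSeq w j = (j : ℕ) := by
  have h2 : (univ.filter (fun k : Fin n => k < j ∧ w.symm j < w.symm k))
      = (univ.filter (fun k : Fin n => k < j)).filter
          (fun k => ¬ w.symm k < w.symm j) := by
    rw [Finset.filter_filter]
    apply Finset.filter_congr
    intro k _
    constructor
    · rintro ⟨h1, h2⟩; exact ⟨h1, not_lt.mpr h2.le⟩
    · rintro ⟨h1, h2⟩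
      refine ⟨h1, lt_of_le_of_ne (not_lt.mp h2) ?_⟩
      intro he; exact absurd (w.symm.injective he) (Fin.ne_of_lt h1).symm
  have h1 : (univ.filter (fun k : Fin n => k < j ∧ w.symm k < w.symm j))
      = (univ.filter (fun k : Fin n => k < j)).filter
          (fun k => w.symm k < w.symm j) := by
    rw [Finset.filter_filter]
  rw [bCnt, invSeq, h1, h2,
    Finset.card_filter_add_card_filter_not, filter_lt_card]

lemma pos_lt_iff {n : ℕ} (w : Equiv.Perm (Fin n)) {i j : Fin n} (hij : i < j) :
    w.symm i < w.symm j ↔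
      (univ.filter (fun k : Fin n => k < j ∧ w.symm k < w.symm i)).card < bCnt w j := by
  constructor
  · intro h
    apply Finset.card_lt_card
    constructor
    · intro k hk
      simp only [Finset.mem_filter, Finset.mem_univ, true_and] at hk ⊢
      exact ⟨hk.1, hk.2.trans h⟩
    · intro hsub
      have hi : i ∈ univ.filter (fun k : Fin n => k < j ∧ w.symm k < w.symm j) := by
        simp [hij, h]
      have := hsub hi
      simp only [Finset.mem_filter, Finset.mem_univ, true_and] at this
      exact lt_irrefl _ this.2
  · intro h
    by_contra hne
    have hne' : w.symm j < w.symm i := by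
      refine lt_of_le_of_ne (not_lt.mp hne) ?_
      intro he; exact absurd (w.symm.injective he) (Fin.ne_of_lt hij).symm
    have : bCnt w j ≤
        (univ.filter (fun k : Fin n => k < j ∧ w.symm k < w.symm i)).card := by
      apply Finset.card_le_card
      intro k hk
      simp only [Finset.mem_filter, Finset.mem_univ, true_and] at hk ⊢
      exact ⟨hk.1, hk.2.trans hne'⟩
    omega

lemma lt_iff_not_lt_of_ne {m : ℕ} {a b : Fin m} (h : a ≠ b) : b < a ↔ ¬ a < b :=
  ⟨fun hba hab => lt_asymm hab hba, fun hn => (h.lt_or_gt.resolve_left hn)⟩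

lemma invSeq_inj {n : ℕ} {v w : Equiv.Perm (Fin n)}
    (h : ∀ i, invSeq v i = invSeq w i) : v = w := by
  have key : ∀ m : ℕ, ∀ j : Fin n, (j : ℕ) = m → ∀ i : Fin n, i < j →
      (v.symm i < v.symm j ↔ w.symm i < w.symm j) := by
    intro m
    induction m using Nat.strong_induction_on with
    | _ m IH =>
      intro j hj i hij
      have hb : bCnt v j = bCnt w j := by
        have h1 := bCnt_add_invSeq v j
        have h2 := bCnt_add_invSeq w j
        have := h j
        omega
      have hfilt : (univ.filter (fun k : Fin n => k < j ∧ v.symm k < v.symm i))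
          = (univ.filter (fun k : Fin n => k < j ∧ w.symm k < w.symm i)) := by
        apply Finset.filter_congr
        intro k _
        constructor <;> intro ⟨hkj, hk⟩ <;> refine ⟨hkj, ?_⟩
        · rcases lt_trichotomy k i with hki | rfl | hik
          · exact (IH i (hj ▸ hij) i rfl k hki).mp hk
          · exact absurd hk (lt_irrefl _)
          · have hne : w.symm i ≠ w.symm k :=
              fun he => (Fin.ne_of_lt hik) (w.symm.injective he)
            rw [lt_iff_not_lt_of_ne hne]
            intro hc
            have := (IH k (hj ▸ hkj) k rfl i hik).mpr hc
            exact lt_asymm hk this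
        · rcases lt_trichotomy k i with hki | rfl | hik
          · exact (IH i (hj ▸ hij) i rfl k hki).mpr hk
          · exact absurd hk (lt_irrefl _)
          · have hne : v.symm i ≠ v.symm k :=
              fun he => (Fin.ne_of_lt hik) (v.symm.injective he)
            rw [lt_iff_not_lt_of_ne hne]
            intro hc
            have := (IH k (hj ▸ hkj) k rfl i hik).mp hc
            exact lt_asymm hk this
      rw [pos_lt_iff v hij, pos_lt_iff w hij, hfilt, hb]
  have key2 : ∀ i j : Fin n, v.symm i < v.symm j ↔ w.symm i < w.symm j := by
    intro i j
    rcases lt_trichotomy i j with hij | rfl | hji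
    · exact key j j rfl i hij
    · simp
    · have h1 := key i i rfl j hji
      have hne1 : v.symm j ≠ v.symm i :=
        fun he => (Fin.ne_of_lt hji) (v.symm.injective he)
      have hne2 : w.symm j ≠ w.symm i :=
        fun he => (Fin.ne_of_lt hji) (w.symm.injective he)
      rw [lt_iff_not_lt_of_ne hne1, lt_iff_not_lt_of_ne hne2, h1]
  have hsymm : v.symm = w.symm := by
    apply Equiv.ext
    intro i
    apply Fin.ext
    rw [← rank_card v.symm i, ← rank_card w.symm i]
    congr 1
    apply Finset.filter_congr
    intro k _
    exact key2 k i
  have := congrArg Equiv.symm hsymm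
  simpa using this

lemma invSeq_surj {n : ℕ} (c : Fin n → ℕ) (hc : ∀ i, c i ≤ (i : ℕ)) :
    ∃ w : Equiv.Perm (Fin n), ∀ i, invSeq w i = c i := by
  let F : Equiv.Perm (Fin n) → (∀ i : Fin n, Fin ((i : ℕ) + 1)) :=
    fun w i => ⟨invSeq w i, Nat.lt_succ_of_le (invSeq_le w i)⟩
  have hinj : Function.Injective F := by
    intro a b hab
    exact invSeq_inj (fun i => congrArg Fin.val (congrFun hab i))
  have hcard : Fintype.card (Equiv.Perm (Fin n))
      = Fintype.card (∀ i : Fin n, Fin ((i : ℕ) + 1)) := by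
    rw [Fintype.card_perm, Fintype.card_pi]
    simp only [Fintype.card_fin, Fintype.card_fin]
    rw [Fin.prod_univ_eq_prod_range (fun i => i + 1) n,
      Finset.prod_range_add_one_eq_factorial]
  have hbij : Function.Bijective F :=
    (Fintype.bijective_iff_injective_and_card F).mpr ⟨hinj, hcard⟩
  obtain ⟨w, hw⟩ := hbij.2 (fun i => ⟨c i, Nat.lt_succ_of_le (hc i)⟩)
  exact ⟨w, fun i => congrArg Fin.val (congrFun hw i)⟩

lemma avoid_iff {n : ℕ} (v : Equiv.Perm (Fin n)) :
    (Avoids132 v ∧ Avoids231 v) ↔ ∀ i, invSeq v i = 0 ∨ invSeq v i = (i : ℕ) := by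
  constructor
  · rintro ⟨h132, h231⟩ c
    by_contra hcon
    push_neg at hcon
    obtain ⟨h0, hc⟩ := hcon
    -- some smaller value after c
    have hne : (univ.filter (fun j : Fin n => j < c ∧ v.symm c < v.symm j)).Nonempty := by
      rw [← Finset.card_pos]
      have : invSeq v c ≠ 0 := h0
      unfold invSeq at this
      omega
    obtain ⟨d, hd⟩ := hne
    simp only [Finset.mem_filter, Finset.mem_univ, true_and] at hd
    -- some smaller value before c
    have hb0 : bCnt v c ≠ 0 := by
      have h1 := bCnt_add_invSeq v c
      have h2 := invSeq_le v c
      omega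
    have hne2 : (univ.filter (fun k : Fin n => k < c ∧ v.symm k < v.symm c)).Nonempty := by
      rw [← Finset.card_pos]
      unfold bCnt at hb0
      omega
    obtain ⟨b, hb⟩ := hne2
    simp only [Finset.mem_filter, Finset.mem_univ, true_and] at hb
    have hvb : v (v.symm b) = b := v.apply_symm_apply b
    have hvc : v (v.symm c) = c := v.apply_symm_apply c
    have hvd : v (v.symm d) = d := v.apply_symm_apply d
    rcases lt_trichotomy b d with hbd | rfl | hdb
    · exact h132 ⟨v.symm b, v.symm c, v.symm d, hb.2, hd.2, by rw [hvb, hvd]; exact hbd,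
        by rw [hvd, hvc]; exact hd.1⟩
    · exact absurd hd.2 (lt_asymm hb.2)
    · exact h231 ⟨v.symm b, v.symm c, v.symm d, hb.2, hd.2, by rw [hvb, hvd]; exact hdb,
        by rw [hvb, hvc]; exact hb.1⟩
  · intro hcode
    have bad : ∀ i j k : Fin n, i < j → j < k → v i < v j → v k < v j → False := by
      intro i j k hij hjk h1 h2
      have hsi : v.symm (v i) = i := v.symm_apply_apply i
      have hsj : v.symm (v j) = j := v.symm_apply_apply j
      have hsk : v.symm (v k) = k := v.symm_apply_apply k
      have hm1 : v k ∈ univ.filter (fun l : Fin n => l < v j ∧ v.symm (v j) < v.symm l) := by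
        simp only [Finset.mem_filter, Finset.mem_univ, true_and]
        exact ⟨h2, by rw [hsj, hsk]; exact hjk⟩
      have hm2 : v i ∈ univ.filter (fun l : Fin n => l < v j ∧ v.symm l < v.symm (v j)) := by
        simp only [Finset.mem_filter, Finset.mem_univ, true_and]
        exact ⟨h1, by rw [hsj, hsi]; exact hij⟩
      have c1 : invSeq v (v j) ≠ 0 := by
        unfold invSeq
        exact Finset.card_ne_zero_of_mem hm1
      have c2 : bCnt v (v j) ≠ 0 := by
        unfold bCnt
        exact Finset.card_ne_zero_of_mem hm2
      have h3 := bCnt_add_invSeq v (v j)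
      rcases hcode (v j) with h | h <;> omega
    constructor
    · rintro ⟨i, j, k, hij, hjk, h1, h2⟩
      exact bad i j k hij hjk (h1.trans h2) h2
    · rintro ⟨i, j, k, hij, hjk, h1, h2⟩
      exact bad i j k hij hjk h2 (h1.trans h2)

lemma pc_spec {n : ℕ} {v p : Equiv.Perm (Fin n)} (h : IsPseudocomplement v p) :
    ∀ i, invSeq p i = if invSeq v i = 0 then (i : ℕ) else 0 := by
  obtain ⟨u, hu⟩ := invSeq_surj (fun i : Fin n => if invSeq v i = 0 then (i : ℕ) else 0)
    (by intro i; beta_reduce; split <;> simp)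
  have humin : ∀ i, min (invSeq v i) (invSeq u i) = 0 := by
    intro i; rw [hu]; split <;> simp_all
  have hup := h.2 u humin
  intro i
  by_cases hv : invSeq v i = 0
  · rw [if_pos hv]
    have h1 := hup i
    rw [hu i] at h1
    simp only [hv, if_pos] at h1
    exact le_antisymm (invSeq_le p i) h1
  · rw [if_neg hv]
    have := h.1 i
    omega

/-- In the Heyting algebra structure of the middle order, the relative pseudocomplement
`v ⇝ w` has inversion sequence `z_i = i - 1` if `x_i ≤ y_i` and `z_i = y_i` otherwise
(0-indexed: `z_i = i`); and `v` is regular (`v = ¬¬v`) iff each `x_i` is `0` or `i - 1`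
(0-indexed: `i`), iff `v` avoids both `132` and `231`. -/
theorem middle_order_heyting (n : ℕ) (v w : Equiv.Perm (Fin n)) :
    (∃ r : Equiv.Perm (Fin n),
      (∀ i : Fin n, invSeq r i =
        if invSeq v i ≤ invSeq w i then (i : ℕ) else invSeq w i) ∧
      (∀ i, min (invSeq v i) (invSeq r i) ≤ invSeq w i) ∧
      (∀ u : Equiv.Perm (Fin n),
        (∀ i, min (invSeq v i) (invSeq u i) ≤ invSeq w i) → midLe u r)) ∧
    (∀ p q : Equiv.Perm (Fin n), IsPseudocomplement v p → IsPseudocomplement p q →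
      ((v = q ↔ ∀ i : Fin n, invSeq v i = 0 ∨ invSeq v i = (i : ℕ)) ∧
       (v = q ↔ Avoids132 v ∧ Avoids231 v))) := by
  constructor
  · obtain ⟨r, hr⟩ := invSeq_surj
      (fun i : Fin n => if invSeq v i ≤ invSeq w i then (i : ℕ) else invSeq w i)
      (by intro i; beta_reduce; split
          · exact le_refl _
          · exact invSeq_le w i)
    refine ⟨r, hr, ?_, ?_⟩
    · intro i
      rw [hr i]
      split
      · next h => exact le_trans (min_le_left _ _) h
      · exact min_le_right _ _
    · intro u hu i
      rw [hr i]
      have h1 := hu i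
      have h2 := invSeq_le u i
      split <;> omega
  · intro p q hp hq
    have hps := pc_spec hp
    have hqs := pc_spec hq
    have iff1 : v = q ↔ ∀ i : Fin n, invSeq v i = 0 ∨ invSeq v i = (i : ℕ) := by
      constructor
      · intro he i
        rw [he, hqs i]
        split <;> simp
      · intro hcond
        apply invSeq_inj
        intro i
        rw [hqs i, hps i]
        rcases hcond i with h | h <;> rw [h] <;> split_ifs <;> omega
    exact ⟨iff1, iff1.trans (avoid_iff v).symm⟩
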